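/- In the setting of the previous reflection configuration, neither L₁ nor L₂ passes through an endpoint (0,1) or (0,-1) of the semicircle C. -/

import Mathlib

open Real

/-- A point of the open right unit semicircle, given by its polar angle. -/
noncomputable def semicirclePt (θ : ℝ) : ℝ × ℝ := (Real.cos θ, Real.sin θ)

lemma key_miss (θ t ε : ℝ) (hθ₁ : -(π / 2) < θ) (hθ₂ : θ < π / 2)
    (u v : ℝ × ℝ)
    (hv : v = (2 * (u.1 * Real.cos θ + u.2 * Real.sin θ)) • semicirclePt θ - u)
    (hinv : v.1 < 0)
    (hslu : |u.2| < |u.1|) (hslv : |v.2| < |v.1|)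
    (hε : ε = 1 ∨ ε = -1) (ht : 0 < t) :
    semicirclePt θ + t • u ≠ (0, ε) := by
  intro h
  set s := Real.sin θ with hs_def
  set c := Real.cos θ with hc_def
  have hc : 0 < c := Real.cos_pos_of_mem_Ioo ⟨hθ₁, hθ₂⟩
  have hsc : s ^ 2 + c ^ 2 = 1 := Real.sin_sq_add_cos_sq θ
  have h1 : c + t * u.1 = 0 := by
    have := congrArg Prod.fst h
    simpa [semicirclePt] using this
  have h2 : s + t * u.2 = ε := by
    have := congrArg Prod.snd h
    simpa [semicirclePt] using this
  have e1 : t * u.1 = -c := by linarith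
  have e2 : t * u.2 = ε - s := by linarith
  have habsu : u.2 * u.2 < u.1 * u.1 := by
    have := mul_self_lt_mul_self (abs_nonneg _) hslu
    rwa [abs_mul_abs_self, abs_mul_abs_self] at this
  have key1 : (ε - s) ^ 2 < c ^ 2 := by
    have h3 : (t * u.2) ^ 2 < (t * u.1) ^ 2 := by nlinarith [mul_pos ht ht, habsu]
    rw [e1, e2] at h3
    nlinarith [h3]
  have hv1 : v.1 = 2 * (u.1 * c + u.2 * s) * c - u.1 := by
    rw [hv]; simp [semicirclePt]; exact Or.inl hc_def.symm
  have hv2 : v.2 = 2 * (u.1 * c + u.2 * s) * s - u.2 := by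
    rw [hv]; simp [semicirclePt]; exact Or.inl hs_def.symm
  have f1 : t * v.1 = c * (2 * ε * s - 1) := by
    rw [hv1]
    linear_combination (2 * c ^ 2 - 1) * e1 + 2 * s * c * e2 - 2 * c * hsc
  have f2 : t * v.2 = 2 * ε * s ^ 2 - s - ε := by
    rw [hv2]
    linear_combination 2 * s * c * e1 + (2 * s ^ 2 - 1) * e2 - 2 * s * hsc
  have hneg : c * (2 * ε * s - 1) < 0 := by
    rw [← f1]; exact mul_neg_of_pos_of_neg ht hinv
  have habsv : v.2 * v.2 < v.1 * v.1 := by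
    have := mul_self_lt_mul_self (abs_nonneg _) hslv
    rwa [abs_mul_abs_self, abs_mul_abs_self] at this
  have key2 : (2 * ε * s ^ 2 - s - ε) ^ 2 < (c * (2 * ε * s - 1)) ^ 2 := by
    have h4 : (t * v.2) ^ 2 < (t * v.1) ^ 2 := by nlinarith [mul_pos ht ht, habsv]
    rwa [f1, f2] at h4
  have hc2 : c ^ 2 = 1 - s ^ 2 := by linarith
  rcases hε with rfl | rfl
  · -- ε = 1
    have hs0 : 0 < s := by linarith [sq_nonneg s, key1]
    have hs12 : s < 1 / 2 := by
      by_contra hcon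
      push_neg at hcon
      have : 0 ≤ c * (2 * 1 * s - 1) := mul_nonneg hc.le (by linarith)
      linarith
    have h1s : 0 < 1 - s := by linarith
    have h34 : 0 < 3 - 4 * s ^ 2 := by
      have := mul_lt_mul'' hs12 hs12 hs0.le hs0.le
      linarith [this]
    have e : (c * (2 * 1 * s - 1)) ^ 2 = (1 - s ^ 2) * (2 * s - 1) ^ 2 := by
      rw [mul_pow, hc2]; ring
    rw [e] at key2
    have P : 0 < s * (1 - s) * (3 - 4 * s ^ 2) := mul_pos (mul_pos hs0 h1s) h34
    linarith [key2, P]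
  · -- ε = -1
    have hs0 : s < 0 := by linarith [sq_nonneg s, key1]
    have hs12 : -(1 / 2) < s := by
      by_contra hcon
      push_neg at hcon
      have : 0 ≤ c * (2 * (-1) * s - 1) := mul_nonneg hc.le (by linarith)
      linarith
    have h1s : 0 < 1 + s := by linarith
    have h34 : 0 < 3 - 4 * s ^ 2 := by
      have hns : 0 < -s := neg_pos.mpr hs0
      have := mul_lt_mul'' (show -s < 1 / 2 by linarith) (show -s < 1 / 2 by linarith) hns.le hns.le
      linarith [this]
    have e : (c * (2 * (-1) * s - 1)) ^ 2 = (1 - s ^ 2) * (2 * s + 1) ^ 2 := by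
      rw [mul_pow, hc2]; ring
    rw [e] at key2
    have P : 0 < -s * (1 + s) * (3 - 4 * s ^ 2) := mul_pos (mul_pos (neg_pos.mpr hs0) h1s) h34
    linarith [key2, P]

theorem reflection_misses_endpoints (θ : ℝ)
    (hθ₁ : -(π / 2) < θ) (hθ₂ : θ < π / 2)
    (u₁ u₂ : ℝ × ℝ)
    -- L₂ is the billiard reflection of L₁: u₂ is the mirror image of u₁
    -- across the radius (normal) direction at A = (cos θ, sin θ)
    (hrefl : u₂ = (2 * (u₁.1 * Real.cos θ + u₁.2 * Real.sin θ)) •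
        semicirclePt θ - u₁)
    (hu₁ : u₁ ≠ 0)
    -- both rays point into the region to the left of the semicircle
    (hin₁ : u₁.1 < 0) (hin₂ : u₂.1 < 0)
    -- each ray makes an angle less than π/4 with the horizontal
    (hslope₁ : |u₁.2| < |u₁.1|) (hslope₂ : |u₂.2| < |u₂.1|)
    -- each ray intersects the semicircle only at A
    (honly₁ : ∀ t : ℝ, 0 < t → ∀ φ : ℝ, -(π / 2) < φ → φ < π / 2 →
        semicirclePt θ + t • u₁ ≠ semicirclePt φ)
    (honly₂ : ∀ t : ℝ, 0 < t → ∀ φ : ℝ, -(π / 2) < φ → φ < π / 2 →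
        semicirclePt θ + t • u₂ ≠ semicirclePt φ) :
    (∀ t : ℝ, 0 < t → semicirclePt θ + t • u₁ ≠ (0, 1) ∧ semicirclePt θ + t • u₁ ≠ (0, -1)) ∧
    (∀ t : ℝ, 0 < t → semicirclePt θ + t • u₂ ≠ (0, 1) ∧ semicirclePt θ + t • u₂ ≠ (0, -1)) := by
  have hsc : Real.sin θ ^ 2 + Real.cos θ ^ 2 = 1 := Real.sin_sq_add_cos_sq θ
  have h21 : u₂.1 = 2 * (u₁.1 * Real.cos θ + u₁.2 * Real.sin θ) * Real.cos θ - u₁.1 := by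
    rw [hrefl]; simp [semicirclePt]
  have h22 : u₂.2 = 2 * (u₁.1 * Real.cos θ + u₁.2 * Real.sin θ) * Real.sin θ - u₁.2 := by
    rw [hrefl]; simp [semicirclePt]
  have hrefl' : u₁ = (2 * (u₂.1 * Real.cos θ + u₂.2 * Real.sin θ)) •
      semicirclePt θ - u₂ := by
    have hx : u₁.1 = 2 * (u₂.1 * Real.cos θ + u₂.2 * Real.sin θ) * Real.cos θ - u₂.1 := by
      rw [h21, h22]
      linear_combination (-4 * (u₁.1 * Real.cos θ + u₁.2 * Real.sin θ) * Real.cos θ) * hsc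
    have hy : u₁.2 = 2 * (u₂.1 * Real.cos θ + u₂.2 * Real.sin θ) * Real.sin θ - u₂.2 := by
      rw [h21, h22]
      linear_combination (-4 * (u₁.1 * Real.cos θ + u₁.2 * Real.sin θ) * Real.sin θ) * hsc
    ext
    · simpa [semicirclePt] using hx
    · simpa [semicirclePt] using hy
  constructor
  · intro t ht
    exact ⟨key_miss θ t 1 hθ₁ hθ₂ u₁ u₂ hrefl hin₂ hslope₁ hslope₂ (Or.inl rfl) ht,
      key_miss θ t (-1) hθ₁ hθ₂ u₁ u₂ hrefl hin₂ hslope₁ hslope₂ (Or.inr rfl) ht⟩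
  · intro t ht
    exact ⟨key_miss θ t 1 hθ₁ hθ₂ u₂ u₁ hrefl' hin₁ hslope₂ hslope₁ (Or.inl rfl) ht,
      key_miss θ t (-1) hθ₁ hθ₂ u₂ u₁ hrefl' hin₁ hslope₂ hslope₁ (Or.inr rfl) ht⟩
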